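/- Let (T,X) be a topological flow on a Polish space X with T an abelian group equipped with the discrete topology. If (T,X) is Devaney chaotic (topologically transitive, periodic points dense, and not minimal), then (T,X) is multi-dimensional Li-Yorke chaotic: for every increasing sequence F₁ ⊆ F₂ ⊆ ⋯ of finite subsets of T there is an uncountable set Θ ⊆ X such that for every k ≥ 2 and all pairwise distinct x₁,…,x_k ∈ Θ there exist a point p ∈ X and sequences (t_n), (s_n) in T with s_n ∉ F_n for all n, such that t_n•x_i → p for each i and s_n•x_i → x_i for each i, as n → ∞. -/

import Mathlib

open Filter Topology Set

/-- A subset `B` of a discrete group `T` is *syndetic* if there is a finite set `K ⊆ T`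
such that `K·t` meets `B` for every `t ∈ T`. -/
def SyndeticDiscrete {T : Type*} [Monoid T] (B : Set T) : Prop :=
  ∃ K : Set T, K.Finite ∧ ∀ t : T, ∃ k ∈ K, k * t ∈ B

namespace DMLY

open Metric Pointwise

set_option linter.unusedSectionVars false

variable {T X : Type*} [CommGroup T] [MetricSpace X] [MulAction T X] [ContinuousConstSMul T X]

lemma exists_two
    (htrans : ∀ U V : Set X, IsOpen U → U.Nonempty → IsOpen V → V.Nonempty →
      ∃ t : T, ∃ x ∈ U, t • x ∈ V)
    (hper : Dense {x : X | SyndeticDiscrete {t : T | t • x = x}})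
    (hnonmin : ∃ x : X, ¬ Dense (MulAction.orbit T x))
    {V : Set X} (hV : IsOpen V) (hVne : V.Nonempty) :
    ∃ x ∈ V, ∃ y ∈ V, x ≠ y := by
  by_contra hcon
  push_neg at hcon
  obtain ⟨x₀, hx₀⟩ := hVne
  have hsingle : V = {x₀} := by
    ext y
    constructor
    · intro hy; exact hcon y hy x₀ hx₀
    · rintro rfl; exact hx₀
  have hopen : IsOpen ({x₀} : Set X) := hsingle ▸ hV
  -- x₀ is periodic
  have hx₀per : SyndeticDiscrete {t : T | t • x₀ = x₀} := by
    have := dense_iff_inter_open.1 hper {x₀} hopen ⟨x₀, rfl⟩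
    obtain ⟨y, hy1, hy2⟩ := this
    rcases hy1 with rfl
    exact hy2
  obtain ⟨K, hKf, hK⟩ := hx₀per
  -- the orbit of x₀ is finite
  have horb_sub : MulAction.orbit T x₀ ⊆ (fun k => k⁻¹ • x₀) '' K := by
    rintro _ ⟨t, rfl⟩
    obtain ⟨k, hkK, hk⟩ := hK t
    refine ⟨k, hkK, ?_⟩
    have : (k * t) • x₀ = x₀ := hk
    calc k⁻¹ • x₀ = k⁻¹ • ((k * t) • x₀) := by rw [this]
      _ = (k⁻¹ * (k * t)) • x₀ := (mul_smul _ _ _).symm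
      _ = t • x₀ := by rw [inv_mul_cancel_left]
  have hfin : (MulAction.orbit T x₀).Finite := (hKf.image _).subset horb_sub
  -- the orbit of x₀ is dense
  have hdense : Dense (MulAction.orbit T x₀) := by
    rw [dense_iff_inter_open]
    intro U hU hUne
    obtain ⟨t, x, hx, htx⟩ := htrans {x₀} U hopen ⟨x₀, rfl⟩ hU hUne
    rcases hx with rfl
    exact ⟨t • x, htx, MulAction.mem_orbit _ _⟩
  have huniv : MulAction.orbit T x₀ = univ := by
    have := hdense.closure_eq
    rwa [hfin.isClosed.closure_eq] at this
  -- every singleton is open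
  have hsing : ∀ y : X, IsOpen ({y} : Set X) := by
    intro y
    have : y ∈ MulAction.orbit T x₀ := huniv ▸ mem_univ y
    obtain ⟨t, rfl⟩ := this
    have := hopen.smul t
    rwa [smul_set_singleton] at this
  obtain ⟨w, hw⟩ := hnonmin
  apply hw
  rw [dense_iff_inter_open]
  intro U hU hUne
  obtain ⟨t, x, hx, htx⟩ := htrans {w} U (hsing w) ⟨w, rfl⟩ hU hUne
  rcases hx with rfl
  exact ⟨t • x, htx, MulAction.mem_orbit _ _⟩

lemma T_infinite
    (htrans : ∀ U V : Set X, IsOpen U → U.Nonempty → IsOpen V → V.Nonempty →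
      ∃ t : T, ∃ x ∈ U, t • x ∈ V)
    (hnonmin : ∃ x : X, ¬ Dense (MulAction.orbit T x)) :
    Infinite T := by
  rcases finite_or_infinite T with hfin | hinf
  · exfalso
    haveI := Fintype.ofFinite T
    obtain ⟨x₀, hx₀⟩ := hnonmin
    have horbfin : (MulAction.orbit T x₀).Finite := Set.finite_range _
    obtain ⟨y, hy⟩ : ∃ y, y ∉ closure (MulAction.orbit T x₀) := by
      by_contra h
      push_neg at h
      exact hx₀ (fun x => h x)
    have hynotorb : ∀ t : T, t • x₀ ≠ y := by
      intro t ht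
      exact hy (subset_closure (ht ▸ MulAction.mem_orbit _ _))
    have hTne : (Finset.univ : Finset T).Nonempty := ⟨1, Finset.mem_univ 1⟩
    set m := Finset.univ.inf' hTne (fun t : T => dist (t • x₀) y) with hm
    have hmpos : 0 < m := by
      rw [hm, Finset.lt_inf'_iff]
      intro t _
      exact dist_pos.2 (hynotorb t)
    have hmle : ∀ t : T, m ≤ dist (t • x₀) y := fun t =>
      Finset.inf'_le _ (Finset.mem_univ t)
    set U := ⋂ t : T, (fun x => t • x) ⁻¹' ball (t • x₀) (m/2) with hU
    have hUopen : IsOpen U :=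
      isOpen_iInter_of_finite fun t => (isOpen_ball).preimage (continuous_const_smul t)
    have hx₀U : x₀ ∈ U := by
      rw [hU]
      refine mem_iInter.2 fun t => ?_
      simp [mem_ball, dist_self, half_pos hmpos]
    obtain ⟨t, u, hu, htu⟩ := htrans U (ball y (m/2)) hUopen ⟨x₀, hx₀U⟩ isOpen_ball
      ⟨y, mem_ball_self (half_pos hmpos)⟩
    have h1 : dist (t • u) (t • x₀) < m/2 := by
      have := mem_iInter.1 hu t
      simpa [mem_ball] using this
    have h2 : dist (t • u) y < m/2 := by simpa [mem_ball] using htu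
    have := hmle t
    have : m ≤ dist (t • x₀) (t • u) + dist (t • u) y := (hmle t).trans (dist_triangle _ _ _)
    rw [dist_comm (t • x₀) (t • u)] at this
    linarith
  · exact hinf

lemma common_stab [Infinite T] {ι : Type*} [Finite ι] (q : ι → X)
    (hq : ∀ i, SyndeticDiscrete {t : T | t • q i = q i})
    (Ffin : Set T) (hFfin : Ffin.Finite) :
    ∃ s : T, s ∉ Ffin ∧ ∀ i, s • q i = q i := by
  classical
  choose K hKfin hK using hq
  choose κ hκK hκfix using fun i t => hK i t
  set Φ : T → (ι → T) := fun t i => κ i t with hΦ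
  have hSfin : (Set.pi univ K).Finite := Set.Finite.pi hKfin
  have hcover : (univ : Set T) ⊆ ⋃ f ∈ Set.pi univ K, Φ ⁻¹' {f} := by
    intro t _
    exact mem_biUnion (fun i _ => hκK i t) rfl
  obtain ⟨f, hfS, hPinf⟩ : ∃ f ∈ Set.pi univ K, (Φ ⁻¹' {f}).Infinite := by
    by_contra h
    push_neg at h
    have : (univ : Set T).Finite :=
      (hSfin.biUnion (fun f hf => h f hf)).subset hcover
    exact Set.infinite_univ this
  obtain ⟨t₀, ht₀⟩ := hPinf.nonempty
  have hQinf : ((fun t => t * t₀⁻¹) '' (Φ ⁻¹' {f})).Infinite :=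
    hPinf.image ((mul_left_injective t₀⁻¹).injOn)
  obtain ⟨s, hsQ, hsF⟩ := (hQinf.diff hFfin).nonempty
  obtain ⟨t, htP, hts⟩ := hsQ
  refine ⟨s, hsF, fun i => ?_⟩
  have hft : κ i t = f i := congrFun htP i
  have hft₀ : κ i t₀ = f i := congrFun ht₀ i
  have h1 : (f i) • (t • q i) = q i := by
    have := hκfix i t
    rw [hft] at this
    rw [← mul_smul]
    exact this
  have h2 : (f i) • (t₀ • q i) = q i := by
    have := hκfix i t₀
    rw [hft₀] at this
    rw [← mul_smul]
    exact this
  have h3 : t • q i = t₀ • q i := by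
    have e1 : t • q i = (f i)⁻¹ • q i := by
      conv_lhs => rw [← inv_smul_smul (f i) (t • q i), h1]
    have e2 : t₀ • q i = (f i)⁻¹ • q i := by
      conv_lhs => rw [← inv_smul_smul (f i) (t₀ • q i), h2]
    rw [e1, e2]
  calc s • q i = (t * t₀⁻¹) • q i := by rw [← hts]
    _ = (t₀⁻¹ * t) • q i := by rw [mul_comm]
    _ = t₀⁻¹ • (t • q i) := by rw [mul_smul]
    _ = t₀⁻¹ • (t₀ • q i) := by rw [h3]
    _ = q i := inv_smul_smul _ _

lemma exists_trans_pt [SecondCountableTopology X] [BaireSpace X] [Nonempty X]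
    (htrans : ∀ U V : Set X, IsOpen U → U.Nonempty → IsOpen V → V.Nonempty →
      ∃ t : T, ∃ x ∈ U, t • x ∈ V) :
    ∃ z : X, ∀ V : Set X, IsOpen V → V.Nonempty → ∃ t : T, t • z ∈ V := by
  obtain ⟨b, hbc, hbne, hbasis⟩ := TopologicalSpace.exists_countable_basis X
  have hD : Dense (⋂₀ ((fun B => ⋃ t : T, (fun x => t • x) ⁻¹' B) '' b)) := by
    apply dense_sInter_of_isOpen
    · rintro s ⟨B, hB, rfl⟩
      exact isOpen_iUnion fun t => (hbasis.isOpen hB).preimage (continuous_const_smul t)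
    · exact hbc.image _
    · rintro s ⟨B, hB, rfl⟩
      rw [dense_iff_inter_open]
      intro U hU hUne
      have hBne : B.Nonempty := nonempty_iff_ne_empty.2 (fun h => hbne (h ▸ hB))
      obtain ⟨t, x, hx, htx⟩ := htrans U B hU hUne (hbasis.isOpen hB) hBne
      exact ⟨x, hx, mem_iUnion.2 ⟨t, htx⟩⟩
  obtain ⟨z, hz⟩ := hD.nonempty
  refine ⟨z, fun V hV hVne => ?_⟩
  obtain ⟨v, hv⟩ := hVne
  obtain ⟨B, hBb, hvB, hBV⟩ := hbasis.exists_subset_of_mem_open hv hV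
  have : z ∈ ⋃ t : T, (fun x => t • x) ⁻¹' B := hz _ ⟨B, hBb, rfl⟩
  obtain ⟨t, ht⟩ := mem_iUnion.1 this
  exact ⟨t, hBV ht⟩

lemma simul (St : Set T) (q₀ : X) (Y : Set X) (hq₀Y : q₀ ∈ Y)
    (hone : (1:T) ∈ St)
    (hmul : ∀ a ∈ St, ∀ b ∈ St, a * b ∈ St)
    (hinv : ∀ a ∈ St, a⁻¹ ∈ St)
    (hfix : ∀ h ∈ St, h • q₀ = q₀)
    (hYinv : ∀ h ∈ St, ∀ y ∈ Y, h • y ∈ Y)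
    (htransY : ∀ U V : Set X, IsOpen U → IsOpen V → (U ∩ Y).Nonempty → (V ∩ Y).Nonempty →
      ∃ h ∈ St, ∃ x ∈ U ∩ Y, h • x ∈ V)
    {ι : Type*} [DecidableEq ι] (s : Finset ι) :
    ∀ (W : ι → Set X), (∀ i ∈ s, IsOpen (W i)) → (∀ i ∈ s, (W i ∩ Y).Nonempty) →
      ∀ ε : ℝ, 0 < ε → ∃ t ∈ St, ∀ i ∈ s, ∃ x ∈ W i ∩ Y, t • x ∈ ball q₀ ε := by
  classical
  induction s using Finset.induction_on with
  | empty =>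
    intro W _ _ ε hε
    exact ⟨1, hone, by simp⟩
  | @insert a s ha IH =>
    intro W hWo hWne ε hε
    rcases s.eq_empty_or_nonempty with rfl | ⟨j, hj⟩
    · -- singleton case: plain relative transitivity
      obtain ⟨h, hhSt, x, hx, hhx⟩ := htransY (W a) (ball q₀ ε)
        (hWo a (Finset.mem_insert_self a ∅)) isOpen_ball
        (hWne a (Finset.mem_insert_self a ∅)) ⟨q₀, mem_ball_self hε, hq₀Y⟩
      refine ⟨h, hhSt, fun i hi => ?_⟩
      rcases Finset.mem_insert.1 hi with rfl | hcon
      · exact ⟨x, hx, hhx⟩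
      · exact absurd hcon (Finset.notMem_empty i)
    · -- merge W a into W j, then apply the induction hypothesis
      have hja : j ∈ insert a s := Finset.mem_insert_of_mem hj
      obtain ⟨u, huSt, xh, hxh, huxh⟩ := htransY (W a) (W j)
        (hWo a (Finset.mem_insert_self a s)) (hWo j hja)
        (hWne a (Finset.mem_insert_self a s)) (hWne j hja)
      have hcont : ContinuousAt (fun x : X => u • x) q₀ :=
        (continuous_const_smul u).continuousAt
      rw [Metric.continuousAt_iff] at hcont
      obtain ⟨δ, hδpos, hδp⟩ := hcont ε hε
      set γ := min δ ε with hγ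
      have hγpos : 0 < γ := lt_min hδpos hε
      set W' := Function.update W j (W j ∩ u • W a) with hW'
      have hW'o : ∀ i ∈ s, IsOpen (W' i) := by
        intro i hi
        by_cases hij : i = j
        · subst hij
          rw [hW', Function.update_self]
          exact (hWo i hja).inter ((hWo a (Finset.mem_insert_self a s)).smul u)
        · rw [hW', Function.update_of_ne hij]
          exact hWo i (Finset.mem_insert_of_mem hi)
      have hW'ne : ∀ i ∈ s, (W' i ∩ Y).Nonempty := by
        intro i hi
        by_cases hij : i = j
        · subst hij
          rw [hW', Function.update_self]
          exact ⟨u • xh, ⟨huxh, Set.smul_mem_smul_set hxh.1⟩, hYinv u huSt _ hxh.2⟩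
        · rw [hW', Function.update_of_ne hij]
          exact hWne i (Finset.mem_insert_of_mem hi)
      obtain ⟨t, htSt, hts⟩ := IH W' hW'o hW'ne γ hγpos
      refine ⟨u * t, hmul u huSt t htSt, ?_⟩
      intro i hi
      rcases Finset.mem_insert.1 hi with rfl | his
      · -- the new index: use the witness at j
        obtain ⟨xj, hxj, htxj⟩ := hts j hj
        rw [hW', Function.update_self] at hxj
        obtain ⟨⟨hxjW, hxjU⟩, hxjY⟩ := hxj
        obtain ⟨w, hwWa, hwx0⟩ := hxjU
        have hwx : u • w = xj := hwx0
        refine ⟨w, ⟨hwWa, ?_⟩, ?_⟩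
        · have hwe : w = u⁻¹ • xj := by rw [← hwx, inv_smul_smul]
          rw [hwe]
          exact hYinv u⁻¹ (hinv u huSt) xj hxjY
        · have he : (u * t) • w = t • xj := by
            rw [mul_comm, mul_smul, hwx]
          rw [he, mem_ball]
          exact lt_of_lt_of_le (mem_ball.1 htxj) (min_le_right δ ε)
      · obtain ⟨xi, hxi, htxi⟩ := hts i his
        have hxiWY : xi ∈ W i ∩ Y := by
          by_cases hij : i = j
          · subst hij
            rw [hW', Function.update_self] at hxi
            exact ⟨hxi.1.1, hxi.2⟩
          · rwa [hW', Function.update_of_ne hij] at hxi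
        refine ⟨xi, hxiWY, ?_⟩
        have he : (u * t) • xi = u • (t • xi) := mul_smul _ _ _
        have h1 : dist (t • xi) q₀ < δ :=
          lt_of_lt_of_le (mem_ball.1 htxi) (min_le_left δ ε)
        have h2 := hδp h1
        rw [hfix u huSt] at h2
        rw [he, mem_ball]
        exact h2

structure GoodFam {X : Type*} [MetricSpace X] (G : Set X) (n : ℕ)
    (V : (ℕ → Bool) → Set X) : Prop where
  isOpen : ∀ a, IsOpen (V a)
  nonempty : ∀ a, (V a).Nonempty
  subG : ∀ a, V a ⊆ G
  prefixEq : ∀ a b : ℕ → Bool, (∀ i, i < n → a i = b i) → V a = V b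
  disj : ∀ a b : ℕ → Bool, (∃ i, i < n ∧ a i ≠ b i) → closure (V a) ∩ closure (V b) = ∅
  small : n ≠ 0 → ∀ a, ∃ c : X, V a ⊆ closedBall c ((1/2) ^ n)

lemma step [Infinite T]
    (hper : Dense {x : X | SyndeticDiscrete {t : T | t • x = x}})
    (htwo : ∀ V : Set X, IsOpen V → V.Nonempty → ∃ x ∈ V, ∃ y ∈ V, x ≠ y)
    (St : Set T) (q₀ : X) (Y : Set X) (hq₀Y : q₀ ∈ Y)
    (hone : (1:T) ∈ St)
    (hmul : ∀ a ∈ St, ∀ b ∈ St, a * b ∈ St)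
    (hinv : ∀ a ∈ St, a⁻¹ ∈ St)
    (hfix : ∀ h ∈ St, h • q₀ = q₀)
    (hYinv : ∀ h ∈ St, ∀ y ∈ Y, h • y ∈ Y)
    (htransY : ∀ U V : Set X, IsOpen U → IsOpen V → (U ∩ Y).Nonempty → (V ∩ Y).Nonempty →
      ∃ h ∈ St, ∃ x ∈ U ∩ Y, h • x ∈ V)
    (G : Set X) (hGY : G ⊆ Y)
    (n : ℕ) (V : (ℕ → Bool) → Set X) (hV : GoodFam G n V)
    (Ffin : Set T) (hFfin : Ffin.Finite) :
    ∃ (W : (ℕ → Bool) → Set X) (t s : T), GoodFam G (n+1) W ∧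
      (∀ a, closure (W a) ⊆ V a) ∧ s ∉ Ffin ∧
      (∀ a, ∀ x ∈ W a, t • x ∈ ball q₀ ((1/2) ^ (n+1))) ∧
      (∀ a, ∀ x ∈ W a, dist (s • x) x ≤ 4 * (1/2) ^ (n+1)) := by
  classical
  set extp : (Fin n → Bool) → (ℕ → Bool) := fun p i => if h : i < n then p ⟨i, h⟩ else false
    with hextp
  set ρ : (Fin (n+1) → Bool) → (Fin n → Bool) := fun j i => j i.castSucc with hρ
  -- Step 1: split each level-n set into two小 balls with disjoint closures
  have hsplit : ∀ p : Fin n → Bool, ∃ AB : Bool → Set X,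
      (∀ c, IsOpen (AB c)) ∧ (∀ c, (AB c).Nonempty) ∧ (∀ c, closure (AB c) ⊆ V (extp p)) ∧
      (∀ c d : Bool, c ≠ d → closure (AB c) ∩ closure (AB d) = ∅) := by
    intro p
    obtain ⟨x, hx, y, hy, hxy⟩ := htwo (V (extp p)) (hV.isOpen _) (hV.nonempty _)
    obtain ⟨εx, hεx, hεxsub⟩ := Metric.isOpen_iff.1 (hV.isOpen (extp p)) x hx
    obtain ⟨εy, hεy, hεysub⟩ := Metric.isOpen_iff.1 (hV.isOpen (extp p)) y hy
    have hdxy : 0 < dist x y := dist_pos.2 hxy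
    set r := min (min (εx/2) (εy/2)) (dist x y / 3) with hr
    have hrpos : 0 < r := lt_min (lt_min (half_pos hεx) (half_pos hεy)) (by linarith)
    have hkey : ∀ z, z ∈ closedBall x r → z ∈ closedBall y r → False := by
      intro z h1 h2
      have : dist x y ≤ dist x z + dist z y := dist_triangle _ _ _
      have e1 : dist x z ≤ r := by rw [dist_comm]; exact mem_closedBall.1 h1
      have e2 : dist z y ≤ r := h2
      have e3 : r ≤ dist x y / 3 := min_le_right _ _
      linarith
    have hcx : closure (ball x r) ⊆ V (extp p) := by
      refine closure_ball_subset_closedBall.trans ?_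
      intro z hz
      apply hεxsub
      have : r ≤ εx / 2 := (min_le_left _ _).trans (min_le_left _ _)
      rw [mem_ball]
      calc dist z x ≤ r := hz
        _ < εx := by linarith
    have hcy : closure (ball y r) ⊆ V (extp p) := by
      refine closure_ball_subset_closedBall.trans ?_
      intro z hz
      apply hεysub
      have : r ≤ εy / 2 := (min_le_left _ _).trans (min_le_right _ _)
      rw [mem_ball]
      calc dist z y ≤ r := hz
        _ < εy := by linarith
    have hdis : closure (ball x r) ∩ closure (ball y r) = ∅ := by
      rw [eq_empty_iff_forall_notMem]
      rintro z ⟨h1, h2⟩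
      exact hkey z (closure_ball_subset_closedBall h1) (closure_ball_subset_closedBall h2)
    refine ⟨fun c => if c then ball y r else ball x r, ?_, ?_, ?_, ?_⟩
    · intro c; cases c <;> simp [isOpen_ball]
    · intro c; cases c <;> simp [hrpos]
    · intro c; cases c
      · simpa using hcx
      · simpa using hcy
    · intro c d hcd; cases c <;> cases d <;> simp_all
      · rw [Set.inter_comm]; exact hdis
  choose AB hABo hABne hABsub hABdisj using hsplit
  set C : (Fin (n+1) → Bool) → Set X := fun j => AB (ρ j) (j (Fin.last n)) with hC
  have hCo : ∀ j, IsOpen (C j) := fun j => hABo _ _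
  have hCne : ∀ j, (C j).Nonempty := fun j => hABne _ _
  have hCsub : ∀ j, closure (C j) ⊆ V (extp (ρ j)) := fun j => hABsub _ _
  have hCG : ∀ j, C j ⊆ G := fun j x hx => hV.subG _ (hCsub j (subset_closure hx))
  -- Step 2: simultaneous attraction to q₀
  obtain ⟨t, htSt, ht⟩ := simul St q₀ Y hq₀Y hone hmul hinv hfix hYinv htransY
    (Finset.univ : Finset (Fin (n+1) → Bool)) C
    (fun j _ => hCo j)
    (fun j _ => by
      obtain ⟨x, hx⟩ := hCne j
      exact ⟨x, hx, hGY (hCG j hx)⟩)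
    ((1/2) ^ (n+1)) (by positivity)
  set B : (Fin (n+1) → Bool) → Set X :=
    fun j => C j ∩ (fun x => t • x) ⁻¹' ball q₀ ((1/2) ^ (n+1)) with hB
  have hBo : ∀ j, IsOpen (B j) :=
    fun j => (hCo j).inter (isOpen_ball.preimage (continuous_const_smul t))
  have hBne : ∀ j, (B j).Nonempty := by
    intro j
    obtain ⟨x, hxCY, htx⟩ := ht j (Finset.mem_univ j)
    exact ⟨x, hxCY.1, htx⟩
  -- Step 3: periodic anchors
  have hanch : ∀ j, ∃ qa, qa ∈ B j ∧ SyndeticDiscrete {r : T | r • qa = qa} := by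
    intro j
    obtain ⟨z, h1, h2⟩ := dense_iff_inter_open.1 hper (B j) (hBo j) (hBne j)
    exact ⟨z, h1, h2⟩
  choose qa hqaB hqaSyn using hanch
  -- Step 4: common stabilizing element avoiding Ffin
  obtain ⟨s, hsF, hsfix⟩ := common_stab qa hqaSyn Ffin hFfin
  -- Step 5: continuity radii at the anchors
  have hδ : ∀ j, ∃ δ : ℝ, 0 < δ ∧ δ ≤ (1/2) ^ (n+1) ∧
      ∀ x', dist x' (qa j) < δ → dist (s • x') (qa j) < (1/2) ^ (n+1) := by
    intro j
    have hc : ContinuousAt (fun x : X => s • x) (qa j) := (continuous_const_smul s).continuousAt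
    rw [Metric.continuousAt_iff] at hc
    obtain ⟨δ₀, hδ₀, hp⟩ := hc ((1/2) ^ (n+1)) (by positivity)
    refine ⟨min δ₀ ((1/2) ^ (n+1)), lt_min hδ₀ (by positivity), min_le_right _ _,
      fun x' hx' => ?_⟩
    have := hp (lt_of_lt_of_le hx' (min_le_left _ _))
    rwa [hsfix j] at this
  choose δ hδpos hδle hδprop using hδ
  set Wf : (Fin (n+1) → Bool) → Set X := fun j => B j ∩ ball (qa j) (δ j) with hWf
  have hWfo : ∀ j, IsOpen (Wf j) := fun j => (hBo j).inter isOpen_ball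
  have hWfne : ∀ j, qa j ∈ Wf j := fun j => ⟨hqaB j, mem_ball_self (hδpos j)⟩
  have hWfC : ∀ j, Wf j ⊆ C j := fun j x hx => hx.1.1
  set W : (ℕ → Bool) → Set X := fun b => Wf (fun i : Fin (n+1) => b i) with hW
  have hWdef : ∀ b : ℕ → Bool, W b = Wf (fun i : Fin (n+1) => b i.1) := fun b => rfl
  -- index bookkeeping
  have hVext : ∀ b : ℕ → Bool, V (extp (ρ (fun i : Fin (n+1) => b i.1))) = V b := by
    intro b
    apply hV.prefixEq
    intro i hi
    simp only [hextp, hρ, dif_pos hi]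
    rfl
  have hnest : ∀ b, closure (W b) ⊆ V b := by
    intro b
    rw [hWdef b]
    have h1 := closure_mono (hWfC (fun i : Fin (n+1) => b i.1))
    exact (h1.trans (hCsub (fun i : Fin (n+1) => b i.1))).trans (le_of_eq (hVext b))
  refine ⟨W, t, s, ?_, hnest, hsF, ?_, ?_⟩
  · constructor
    · intro a; rw [hWdef a]; exact hWfo (fun i : Fin (n+1) => a i.1)
    · intro a; rw [hWdef a]
      exact ⟨qa (fun i : Fin (n+1) => a i.1), hWfne (fun i : Fin (n+1) => a i.1)⟩
    · intro a x hx
      rw [hWdef a] at hx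
      exact hCG (fun i : Fin (n+1) => a i.1) (hWfC (fun i : Fin (n+1) => a i.1) hx)
    · intro a b hab
      have he : (fun i : Fin (n+1) => a i.1) = (fun i : Fin (n+1) => b i.1) :=
        funext fun i => hab i.1 i.isLt
      rw [hWdef a, hWdef b, he]
    · intro a b hab
      obtain ⟨i, hi, hne⟩ := hab
      set j := fun i' : Fin (n+1) => a i'.1 with hj
      set j' := fun i' : Fin (n+1) => b i'.1 with hj'
      have hIne : j ≠ j' := fun h => hne (congrFun h ⟨i, hi⟩)
      have hsub1 : closure (W a) ⊆ closure (C j) := by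
        rw [hWdef a]; exact closure_mono (hWfC j)
      have hsub2 : closure (W b) ⊆ closure (C j') := by
        rw [hWdef b]; exact closure_mono (hWfC j')
      by_cases hρeq : ρ j = ρ j'
      · have hlast : j (Fin.last n) ≠ j' (Fin.last n) := by
          intro hl
          apply hIne
          funext i'
          refine Fin.lastCases hl (fun i'' => ?_) i'
          exact congrFun hρeq i''
        have hd : closure (AB (ρ j) (j (Fin.last n))) ∩
            closure (AB (ρ j) (j' (Fin.last n))) = ∅ := hABdisj (ρ j) _ _ hlast
        have : closure (W a) ∩ closure (W b) ⊆
            closure (AB (ρ j) (j (Fin.last n))) ∩ closure (AB (ρ j) (j' (Fin.last n))) := by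
          refine Set.inter_subset_inter hsub1 ?_
          rw [hρeq]
          exact hsub2
        exact Set.subset_empty_iff.1 (hd ▸ this)
      · obtain ⟨i', hi'⟩ := Function.ne_iff.1 hρeq
        have hd := hV.disj (extp (ρ j)) (extp (ρ j'))
          ⟨i'.1, i'.isLt, by
            simp only [hextp, dif_pos i'.isLt]
            simpa using hi'⟩
        have e1 : closure (W a) ⊆ closure (V (extp (ρ j))) :=
          hsub1.trans ((hCsub j).trans subset_closure)
        have e2 : closure (W b) ⊆ closure (V (extp (ρ j'))) :=
          hsub2.trans ((hCsub j').trans subset_closure)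
        exact Set.subset_empty_iff.1 (hd ▸ Set.inter_subset_inter e1 e2)
    · intro _ a
      rw [hWdef a]
      refine ⟨qa (fun i : Fin (n+1) => a i.1), fun x hx => ?_⟩
      have hd2 : dist x (qa (fun i : Fin (n+1) => a i.1)) < δ (fun i : Fin (n+1) => a i.1) :=
        hx.2
      exact mem_closedBall.2 (le_of_lt (lt_of_lt_of_le hd2 (hδle (fun i : Fin (n+1) => a i.1))))
  · intro a x hx
    rw [hWdef a] at hx
    exact hx.1.2
  · intro a x hx
    rw [hWdef a] at hx
    set j := fun i : Fin (n+1) => a i.1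
    have h1 : dist (s • x) (qa j) < (1/2) ^ (n+1) := hδprop j x hx.2
    have h2 : dist x (qa j) < (1/2) ^ (n+1) := lt_of_lt_of_le hx.2 (hδle j)
    have h3 : dist (s • x) x ≤ dist (s • x) (qa j) + dist (qa j) x := dist_triangle _ _ _
    rw [dist_comm (qa j) x] at h3
    have hp : (0:ℝ) ≤ (1/2) ^ (n+1) := by positivity
    linarith

lemma scheme [CompleteSpace X] (q₀ : X) (G : Set X) (hGopen : IsOpen G) (hGne : G.Nonempty)
    (F : ℕ → Set T) (hs0 : ∃ s₀ : T, s₀ ∉ F 0)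
    (hstep : ∀ (n : ℕ) (V : (ℕ → Bool) → Set X), GoodFam G n V →
      ∃ (W : (ℕ → Bool) → Set X) (t s : T), GoodFam G (n+1) W ∧
        (∀ a, closure (W a) ⊆ V a) ∧ s ∉ F (n+1) ∧
        (∀ a, ∀ x ∈ W a, t • x ∈ ball q₀ ((1/2) ^ (n+1))) ∧
        (∀ a, ∀ x ∈ W a, dist (s • x) x ≤ 4 * (1/2) ^ (n+1))) :
    ∃ (Θ : Set X) (t s : ℕ → T), ¬ Θ.Countable ∧ (∀ n, s n ∉ F n) ∧
      (∀ x ∈ Θ, Tendsto (fun n => t n • x) atTop (𝓝 q₀)) ∧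
      (∀ x ∈ Θ, Tendsto (fun n => s n • x) atTop (𝓝 x)) := by
  classical
  obtain ⟨s₀, hs₀⟩ := hs0
  have good0 : GoodFam G 0 (fun _ => G) :=
    ⟨fun _ => hGopen, fun _ => hGne, fun _ => subset_rfl, fun _ _ _ => rfl,
     fun a b h => absurd h.choose_spec.1 (Nat.not_lt_zero _), fun h => absurd rfl h⟩
  have stepC : ∀ (n : ℕ) (Vh : {V : (ℕ → Bool) → Set X // GoodFam G n V}),
      {d : ((ℕ → Bool) → Set X) × T × T // GoodFam G (n+1) d.1 ∧
        (∀ a, closure (d.1 a) ⊆ Vh.1 a) ∧ d.2.2 ∉ F (n+1) ∧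
        (∀ a, ∀ x ∈ d.1 a, d.2.1 • x ∈ ball q₀ ((1/2) ^ (n+1))) ∧
        (∀ a, ∀ x ∈ d.1 a, dist (d.2.2 • x) x ≤ 4 * (1/2) ^ (n+1))} := by
    intro n Vh
    apply Classical.indefiniteDescription
    obtain ⟨W, t, s, h1, h2, h3, h4, h5⟩ := hstep n Vh.1 Vh.2
    exact ⟨(W, t, s), h1, h2, h3, h4, h5⟩
  obtain ⟨c, hc0, hcS⟩ :
      ∃ c : ∀ n : ℕ, {d : ((ℕ → Bool) → Set X) × T × T // GoodFam G n d.1},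
        (c 0).1 = ((fun _ => G), 1, s₀) ∧
        ∀ n, (c (n+1)).1 = (stepC n ⟨(c n).1.1, (c n).2⟩).1 :=
    ⟨fun n => Nat.rec ⟨((fun _ => G), 1, s₀), good0⟩
      (fun n p => ⟨(stepC n ⟨p.1.1, p.2⟩).1, (stepC n ⟨p.1.1, p.2⟩).2.1⟩) n,
     rfl, fun n => rfl⟩
  have good : ∀ n, GoodFam G n ((c n).1.1) := fun n => (c n).2
  have key : ∀ n, (∀ a, closure ((c (n+1)).1.1 a) ⊆ (c n).1.1 a) ∧
      (c (n+1)).1.2.2 ∉ F (n+1) ∧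
      (∀ a, ∀ x ∈ (c (n+1)).1.1 a, (c (n+1)).1.2.1 • x ∈ ball q₀ ((1/2) ^ (n+1))) ∧
      (∀ a, ∀ x ∈ (c (n+1)).1.1 a, dist ((c (n+1)).1.2.2 • x) x ≤ 4 * (1/2) ^ (n+1)) := by
    intro n
    have E := hcS n
    have e1 : (c (n+1)).1.1 = (stepC n ⟨(c n).1.1, (c n).2⟩).1.1 := by rw [E]
    have e2 : (c (n+1)).1.2.1 = (stepC n ⟨(c n).1.1, (c n).2⟩).1.2.1 := by rw [E]
    have e3 : (c (n+1)).1.2.2 = (stepC n ⟨(c n).1.1, (c n).2⟩).1.2.2 := by rw [E]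
    obtain ⟨hg, h2, h3, h4, h5⟩ := (stepC n ⟨(c n).1.1, (c n).2⟩).2
    refine ⟨?_, ?_, ?_, ?_⟩
    · rw [e1]; exact h2
    · rw [e3]; exact h3
    · rw [e1, e2]; exact h4
    · rw [e1, e3]; exact h5
  -- monotonicity of the scheme
  have hmono : ∀ n a, (c (n+1)).1.1 a ⊆ (c n).1.1 a :=
    fun n a => subset_closure.trans ((key n).1 a)
  have hmono' : ∀ (a : ℕ → Bool) (n m : ℕ), n ≤ m → (c m).1.1 a ⊆ (c n).1.1 a := by
    intro a n m hnm
    induction m, hnm using Nat.le_induction with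
    | base => exact subset_rfl
    | succ m hm ih => exact (hmono m a).trans ih
  -- limit points
  have hlim : ∀ a : ℕ → Bool, ∃ x : X, ∀ n, x ∈ closure ((c n).1.1 a) := by
    intro a
    have hy : ∀ n, ∃ y, y ∈ (c n).1.1 a := fun n => (good n).nonempty a
    choose y hy using hy
    have hcauchy : CauchySeq y := by
      rw [Metric.cauchySeq_iff]
      intro ε hε
      obtain ⟨N₀, hN₀⟩ := exists_pow_lt_of_lt_one (show (0:ℝ) < ε/2 by linarith)
        (show (1/2:ℝ) < 1 by norm_num)
      refine ⟨N₀ + 1, fun m hm m' hm' => ?_⟩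
      obtain ⟨cc, hcc⟩ := (good (N₀+1)).small (Nat.succ_ne_zero N₀) a
      have h1 : y m ∈ closedBall cc ((1/2)^(N₀+1)) := hcc (hmono' a _ _ hm (hy m))
      have h2 : y m' ∈ closedBall cc ((1/2)^(N₀+1)) := hcc (hmono' a _ _ hm' (hy m'))
      have htri : dist (y m) (y m') ≤ dist (y m) cc + dist cc (y m') := dist_triangle _ _ _
      have b1 : dist (y m) cc ≤ (1/2)^(N₀+1) := mem_closedBall.1 h1
      have b2 : dist cc (y m') ≤ (1/2)^(N₀+1) := by
        rw [dist_comm]; exact mem_closedBall.1 h2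
      have b3 : ((1/2):ℝ)^(N₀+1) ≤ (1/2)^N₀ :=
        pow_le_pow_of_le_one (by norm_num) (by norm_num) (Nat.le_succ N₀)
      linarith
    obtain ⟨x, hx⟩ := cauchySeq_tendsto_of_complete hcauchy
    refine ⟨x, fun n => ?_⟩
    apply mem_closure_of_tendsto hx
    filter_upwards [eventually_ge_atTop n] with m hm
    exact hmono' a n m hm (hy m)
  choose θ hθ using hlim
  have hθU : ∀ (a : ℕ → Bool) (n : ℕ), θ a ∈ (c n).1.1 a :=
    fun a n => (key n).1 a (hθ a (n+1))
  have hinj : Function.Injective θ := by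
    intro a b hab
    by_contra hne
    obtain ⟨i, hi⟩ := Function.ne_iff.1 hne
    have hd := (good (i+1)).disj a b ⟨i, Nat.lt_succ_self i, hi⟩
    have hmem : θ a ∈ closure ((c (i+1)).1.1 a) ∩ closure ((c (i+1)).1.1 b) :=
      ⟨subset_closure (hθU a (i+1)), hab ▸ subset_closure (hθU b (i+1))⟩
    rw [hd] at hmem
    exact hmem
  have hss0 : (c 0).1.2.2 = s₀ := by rw [hc0]
  refine ⟨Set.range θ, fun n => (c n).1.2.1, fun n => (c n).1.2.2, ?_, ?_, ?_, ?_⟩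
  · -- uncountability
    intro hcount
    have h1 : Countable (Set.range θ) := hcount.to_subtype
    have h2 : Countable (ℕ → Bool) := by
      have hf : Function.Injective (fun a => (⟨θ a, Set.mem_range_self a⟩ : Set.range θ)) :=
        fun a b hab => hinj (congrArg Subtype.val hab)
      exact hf.countable
    have h3 : Countable (Set ℕ) := by
      have hg : Function.Injective (fun (s : Set ℕ) (n : ℕ) => decide (n ∈ s)) := by
        intro s s' hss'
        ext n
        have := congrFun hss' n
        simpa [decide_eq_decide] using this
      exact hg.countable
    obtain ⟨f, hf⟩ := Countable.exists_injective_nat (Set ℕ)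
    exact Function.cantor_injective f hf
  · intro n
    cases n with
    | zero =>
      show (c 0).1.2.2 ∉ F 0
      rw [hss0]
      exact hs₀
    | succ n => exact (key n).2.1
  · rintro x ⟨a, rfl⟩
    rw [Metric.tendsto_atTop]
    intro ε hε
    obtain ⟨N₀, hN₀⟩ := exists_pow_lt_of_lt_one hε (show (1/2:ℝ) < 1 by norm_num)
    refine ⟨N₀ + 1, fun n hn => ?_⟩
    obtain ⟨m, rfl⟩ : ∃ m, n = m + 1 := ⟨n - 1, by omega⟩
    have h1 := (key m).2.2.1 a (θ a) (hθU a (m+1))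
    have h2 : dist ((c (m+1)).1.2.1 • θ a) q₀ < (1/2)^(m+1) := mem_ball.1 h1
    have h3 : ((1/2):ℝ)^(m+1) ≤ (1/2)^N₀ :=
      pow_le_pow_of_le_one (by norm_num) (by norm_num) (by omega)
    linarith
  · rintro x ⟨a, rfl⟩
    rw [Metric.tendsto_atTop]
    intro ε hε
    obtain ⟨N₀, hN₀⟩ := exists_pow_lt_of_lt_one (show (0:ℝ) < ε/5 by linarith)
      (show (1/2:ℝ) < 1 by norm_num)
    refine ⟨N₀ + 1, fun n hn => ?_⟩
    obtain ⟨m, rfl⟩ : ∃ m, n = m + 1 := ⟨n - 1, by omega⟩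
    have h1 := (key m).2.2.2 a (θ a) (hθU a (m+1))
    have h3 : ((1/2):ℝ)^(m+1) ≤ (1/2)^N₀ :=
      pow_le_pow_of_le_one (by norm_num) (by norm_num) (by omega)
    linarith

theorem master [CompleteSpace X] [SecondCountableTopology X]
    (htrans : ∀ U V : Set X, IsOpen U → U.Nonempty → IsOpen V → V.Nonempty →
      ∃ t : T, ∃ x ∈ U, t • x ∈ V)
    (hper : Dense {x : X | SyndeticDiscrete {t : T | t • x = x}})
    (hnonmin : ∃ x : X, ¬ Dense (MulAction.orbit T x)) :
    ∀ F : ℕ → Set T, (∀ n, (F n).Finite) →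
      ∃ Θ : Set X, ¬ Θ.Countable ∧
        ∀ k : ℕ, 2 ≤ k → ∀ z : Fin k → X, (∀ i, z i ∈ Θ) → Function.Injective z →
          ∃ p : X, ∃ t s : ℕ → T, (∀ n, s n ∉ F n) ∧
            (∀ i, Tendsto (fun n => t n • z i) atTop (𝓝 p)) ∧
            (∀ i, Tendsto (fun n => s n • z i) atTop (𝓝 (z i))) := by
  intro F hFfin
  classical
  obtain ⟨xnm, hxnm⟩ := hnonmin
  haveI : Nonempty X := ⟨xnm⟩
  haveI : Infinite T := T_infinite htrans ⟨xnm, hxnm⟩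
  have htwo : ∀ V : Set X, IsOpen V → V.Nonempty → ∃ x ∈ V, ∃ y ∈ V, x ≠ y :=
    fun V hV hVne => exists_two htrans hper ⟨xnm, hxnm⟩ hV hVne
  obtain ⟨z, hz⟩ := exists_trans_pt (T := T) htrans
  obtain ⟨q₀, hq₀per⟩ : ∃ q₀ : X, SyndeticDiscrete {t : T | t • q₀ = q₀} := hper.nonempty
  obtain ⟨K, hKfin, hK⟩ := hq₀per
  set St : Set T := {t : T | t • q₀ = q₀} with hSt
  have hone : (1:T) ∈ St := by show (1:T) • q₀ = q₀; rw [one_smul]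
  have hfix : ∀ h ∈ St, h • q₀ = q₀ := fun h hh => hh
  have hmul : ∀ a ∈ St, ∀ b ∈ St, a * b ∈ St := by
    intro a ha b hb
    show (a * b) • q₀ = q₀
    rw [mul_smul, hfix b hb, hfix a ha]
  have hinv : ∀ a ∈ St, a⁻¹ ∈ St := by
    intro a ha
    show a⁻¹ • q₀ = q₀
    have := congrArg (fun w => a⁻¹ • w) (hfix a ha)
    simpa [inv_smul_smul] using this.symm
  -- generic covering of X by closures of St-orbits of translates of a transitive point
  have hcoverGen : ∀ w : X, (∀ V : Set X, IsOpen V → V.Nonempty → ∃ t : T, t • w ∈ V) →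
      ∀ x : X, x ∈ ⋃ k ∈ K, closure ((fun s : T => s • (k⁻¹ • w)) '' St) := by
    intro w hw x
    have hsub : Set.range (fun t : T => t • w) ⊆
        ⋃ k ∈ K, ((fun s : T => s • (k⁻¹ • w)) '' St) := by
      rintro _ ⟨t, rfl⟩
      obtain ⟨k, hkK, hk⟩ := hK t
      refine mem_biUnion hkK ⟨k * t, hk, ?_⟩
      show (k * t) • (k⁻¹ • w) = t • w
      rw [smul_smul (k * t) k⁻¹ w, mul_comm k t, mul_assoc, mul_inv_cancel, mul_one]
    have hdense : Dense (Set.range fun t : T => t • w) := by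
      rw [dense_iff_inter_open]
      intro U hU hUne
      obtain ⟨t, ht⟩ := hw U hU hUne
      exact ⟨t • w, ht, Set.mem_range_self t⟩
    have hx : x ∈ closure (Set.range fun t : T => t • w) := hdense x
    have h2 := closure_mono hsub hx
    rwa [hKfin.closure_biUnion] at h2
  obtain ⟨k₀, hk₀K, hq₀mem⟩ := Set.mem_iUnion₂.1 (hcoverGen z hz q₀)
  set z' : X := k₀⁻¹ • z with hz'def
  set A : Set X := (fun s : T => s • z') '' St with hA
  set Y : Set X := closure A with hY
  have hq₀Y : q₀ ∈ Y := hq₀mem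
  have hz'trans : ∀ V : Set X, IsOpen V → V.Nonempty → ∃ t : T, t • z' ∈ V := by
    intro V hV hVne
    obtain ⟨t, ht⟩ := hz V hV hVne
    refine ⟨t * k₀, ?_⟩
    show (t * k₀) • z' ∈ V
    rw [hz'def, smul_smul (t * k₀) k₀⁻¹ z, mul_assoc, mul_inv_cancel, mul_one]
    exact ht
  have hYinv : ∀ h ∈ St, ∀ y ∈ Y, h • y ∈ Y := by
    intro h hh y hy
    have h1 : h • A ⊆ A := by
      rintro _ ⟨w, ⟨s', hs', rfl⟩, rfl⟩
      exact ⟨h * s', hmul h hh s' hs', mul_smul h s' z'⟩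
    have h2 : h • Y ⊆ Y := by
      rw [hY, ← closure_smul]
      exact closure_mono h1
    exact h2 (Set.smul_mem_smul_set hy)
  have hAshift : ∀ s₁ ∈ St, (fun s : T => s • (s₁ • z')) '' St = A := by
    intro s₁ hs₁
    ext w
    constructor
    · rintro ⟨s, hs, rfl⟩
      exact ⟨s * s₁, hmul s hs s₁ hs₁, mul_smul s s₁ z'⟩
    · rintro ⟨s, hs, rfl⟩
      refine ⟨s * s₁⁻¹, hmul s hs s₁⁻¹ (hinv s₁ hs₁), ?_⟩
      show (s * s₁⁻¹) • (s₁ • z') = s • z'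
      rw [smul_smul (s * s₁⁻¹) s₁ z', mul_assoc, inv_mul_cancel, mul_one]
  have htransY : ∀ U V : Set X, IsOpen U → IsOpen V → (U ∩ Y).Nonempty → (V ∩ Y).Nonempty →
      ∃ h ∈ St, ∃ x ∈ U ∩ Y, h • x ∈ V := by
    intro U V hU hV hUY hVY
    obtain ⟨x₁, hx₁U, hx₁Y⟩ := hUY
    obtain ⟨w, hwU, hwA⟩ := (_root_.mem_closure_iff.1 hx₁Y) U hU hx₁U
    obtain ⟨s₁, hs₁St, rfl⟩ := hwA
    obtain ⟨x₂, hx₂V, hx₂Y⟩ := hVY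
    have hx₂A : x₂ ∈ closure ((fun s : T => s • (s₁ • z')) '' St) := by
      rw [hAshift s₁ hs₁St]
      exact hx₂Y
    obtain ⟨w₂, hw₂V, hw₂mem⟩ := (_root_.mem_closure_iff.1 hx₂A) V hV hx₂V
    obtain ⟨s₂, hs₂St, rfl⟩ := hw₂mem
    exact ⟨s₂, hs₂St, s₁ • z', ⟨hwU, subset_closure ⟨s₁, hs₁St, rfl⟩⟩, hw₂V⟩
  -- Y has nonempty interior by Baire
  have hGne : (interior Y).Nonempty := by
    have hsmuleq : ∀ k : T, (fun s : T => s • (k⁻¹ • z')) '' St = k⁻¹ • A := by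
      intro k
      ext w
      constructor
      · rintro ⟨s, hs, rfl⟩
        refine ⟨s • z', ⟨s, hs, rfl⟩, ?_⟩
        show k⁻¹ • (s • z') = s • (k⁻¹ • z')
        rw [smul_smul k⁻¹ s z', smul_smul s k⁻¹ z', mul_comm]
      · rintro ⟨-, ⟨s, hs, rfl⟩, rfl⟩
        refine ⟨s, hs, ?_⟩
        show s • (k⁻¹ • z') = k⁻¹ • (s • z')
        rw [smul_smul s k⁻¹ z', smul_smul k⁻¹ s z', mul_comm]
    have hcov : (⋃ k : K, ((k : T)⁻¹ • Y : Set X)) = univ := by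
      rw [eq_univ_iff_forall]
      intro x
      obtain ⟨k, hkK, hxk⟩ := Set.mem_iUnion₂.1 (hcoverGen z' hz'trans x)
      refine Set.mem_iUnion.2 ⟨⟨k, hkK⟩, ?_⟩
      rw [hsmuleq k, closure_smul] at hxk
      exact hxk
    haveI : Countable ↥K := hKfin.countable.to_subtype
    obtain ⟨k, hk⟩ := nonempty_interior_of_iUnion_of_closed
      (f := fun k : K => ((k : T)⁻¹ • Y : Set X))
      (fun k => (isClosed_closure (s := A)).smul _) hcov
    rw [interior_smul] at hk
    exact Set.smul_set_nonempty.1 hk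
  -- run the scheme
  obtain ⟨s₀, hs₀⟩ : ∃ s₀ : T, s₀ ∉ F 0 := by
    obtain ⟨s₀, hs₀⟩ := ((hFfin 0).infinite_compl).nonempty
    exact ⟨s₀, hs₀⟩
  obtain ⟨Θ, tseq, sseq, hcount, hsF, htlim, hslim⟩ :=
    scheme q₀ (interior Y) isOpen_interior hGne F ⟨s₀, hs₀⟩
      (fun n V hV => step hper htwo St q₀ Y hq₀Y hone hmul hinv hfix hYinv htransY
        (interior Y) interior_subset n V hV (F (n+1)) (hFfin (n+1)))
  exact ⟨Θ, hcount, fun k _ zz hzz _ =>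
    ⟨q₀, tseq, sseq, hsF, fun i => htlim (zz i) (hzz i), fun i => hslim (zz i) (hzz i)⟩⟩

end DMLY

/-- Let `(T,X)` be a topological flow on a Polish space `X` with `T` an abelian group
with the discrete topology. If `(T,X)` is Devaney chaotic (topologically transitive,
dense periodic points, not minimal), then it is multi-dimensional Li-Yorke chaotic. -/
theorem discrete_devaney_implies_multidimensional_LiYorke
    {T X : Type*} [CommGroup T] [TopologicalSpace T] [DiscreteTopology T]
    [TopologicalSpace X] [PolishSpace X] [MulAction T X] [ContinuousSMul T X]
    (htrans : ∀ U V : Set X, IsOpen U → U.Nonempty → IsOpen V → V.Nonempty →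
      ∃ t : T, ∃ x ∈ U, t • x ∈ V)
    (hper : Dense {x : X | SyndeticDiscrete {t : T | t • x = x}})
    (hnonmin : ∃ x : X, ¬ Dense (MulAction.orbit T x)) :
    ∀ F : ℕ → Set T, (∀ n, (F n).Finite) → Monotone F →
      ∃ Θ : Set X, ¬ Θ.Countable ∧
        ∀ k : ℕ, 2 ≤ k → ∀ z : Fin k → X, (∀ i, z i ∈ Θ) → Function.Injective z →
          ∃ p : X, ∃ t s : ℕ → T, (∀ n, s n ∉ F n) ∧
            (∀ i, Tendsto (fun n => t n • z i) atTop (𝓝 p)) ∧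
            (∀ i, Tendsto (fun n => s n • z i) atTop (𝓝 (z i))) := by
  intro F hFfin _hFmono
  letI := TopologicalSpace.upgradeIsCompletelyMetrizable X
  exact DMLY.master htrans hper hnonmin F hFfin
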